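/- Let l ≥ 2 be an integer and let N, M : ℕ → ℤ be as above. Then the sequence of real numbers N(k)/M(k) is strictly increasing in k and converges, as k → ∞, to (l − √(l² − 4))/2 (that is, to a_l⁻¹ where a_l = (l + √(l² − 4))/2). -/

import Mathlib

/-- Let `l ≥ 2` be an integer and `N, M : ℕ → ℤ` with `N(0) = 0`, `M(0) = 1`,
`N(1) = 1`, `M(1) = l`, `N(k+2) = l·N(k+1) − N(k)`, `M(k+2) = l·M(k+1) − M(k)`.
Then `k ↦ N(k)/M(k)` is strictly increasing and converges to
`(l − √(l² − 4))/2 = a_l⁻¹`. -/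
theorem stmt_9 (l : ℤ) (hl : 2 ≤ l) (N M : ℕ → ℤ)
    (hN0 : N 0 = 0) (hM0 : M 0 = 1) (hN1 : N 1 = 1) (hM1 : M 1 = l)
    (hNrec : ∀ k : ℕ, N (k + 2) = l * N (k + 1) - N k)
    (hMrec : ∀ k : ℕ, M (k + 2) = l * M (k + 1) - M k) :
    StrictMono (fun k : ℕ => (N k : ℝ) / (M k : ℝ)) ∧
    Filter.Tendsto (fun k : ℕ => (N k : ℝ) / (M k : ℝ)) Filter.atTop
      (nhds (((l : ℝ) - Real.sqrt ((l : ℝ) ^ 2 - 4)) / 2)) := by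
  -- positivity and monotonicity of M
  have hMkey : ∀ k : ℕ, 0 < M k ∧ M k < M (k + 1) := by
    intro k
    induction k with
    | zero => refine ⟨by simp [hM0], ?_⟩; rw [hM0, hM1]; omega
    | succ n ih =>
      obtain ⟨h1, h2⟩ := ih
      refine ⟨by omega, ?_⟩
      rw [hMrec n]
      nlinarith
  have hMpos : ∀ k : ℕ, 0 < M k := fun k => (hMkey k).1
  have hMge : ∀ k : ℕ, (k : ℤ) + 1 ≤ M k := by
    intro k
    induction k with
    | zero => simp [hM0]
    | succ n ih => have := (hMkey n).2; push_cast; omega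
  -- determinant identity
  have hD : ∀ k : ℕ, N (k + 1) * M k - N k * M (k + 1) = 1 := by
    intro k
    induction k with
    | zero => rw [hN0, hN1, hM0]; ring
    | succ n ih => rw [hNrec n, hMrec n]; nlinarith
  have hMposR : ∀ k : ℕ, (0 : ℝ) < (M k : ℝ) := fun k => by
    exact_mod_cast hMpos k
  have hmono : StrictMono (fun k : ℕ => (N k : ℝ) / (M k : ℝ)) := by
    apply strictMono_nat_of_lt_succ
    intro k
    rw [div_lt_div_iff₀ (hMposR k) (hMposR (k + 1))]
    have := hD k
    have : (N (k + 1) : ℝ) * M k - N k * M (k + 1) = 1 := by exact_mod_cast this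
    linarith
  refine ⟨hmono, ?_⟩
  set α : ℝ := ((l : ℝ) - Real.sqrt ((l : ℝ) ^ 2 - 4)) / 2 with hα
  have hl2 : (2 : ℝ) ≤ (l : ℝ) := by exact_mod_cast hl
  have hnn : (0 : ℝ) ≤ (l : ℝ) ^ 2 - 4 := by nlinarith
  have hsq : Real.sqrt ((l : ℝ) ^ 2 - 4) ^ 2 = (l : ℝ) ^ 2 - 4 :=
    Real.sq_sqrt hnn
  have hroot : α * α = (l : ℝ) * α - 1 := by
    rw [hα]; nlinarith [hsq]
  have hαnonneg : 0 ≤ α := by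
    have h1 : Real.sqrt ((l : ℝ) ^ 2 - 4) ≤ Real.sqrt ((l : ℝ) ^ 2) :=
      Real.sqrt_le_sqrt (by linarith)
    rw [Real.sqrt_sq (by linarith : (0:ℝ) ≤ (l:ℝ))] at h1
    rw [hα]; linarith
  have hαle1 : α ≤ 1 := by
    have h1 : (l : ℝ) - 2 ≤ Real.sqrt ((l : ℝ) ^ 2 - 4) := by
      nlinarith [Real.sqrt_nonneg ((l : ℝ) ^ 2 - 4), hsq]
    rw [hα]; linarith
  -- α * M k - N k = α ^ (k+1)
  have hE : ∀ k : ℕ, α * (M k : ℝ) - (N k : ℝ) = α ^ (k + 1) ∧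
      α * (M (k + 1) : ℝ) - (N (k + 1) : ℝ) = α ^ (k + 2) := by
    intro k
    induction k with
    | zero =>
      constructor
      · rw [hM0, hN0]; push_cast; ring
      · rw [hM1, hN1]; push_cast; nlinarith [hroot]
    | succ n ih =>
      obtain ⟨h1, h2⟩ := ih
      refine ⟨h2, ?_⟩
      rw [hNrec n, hMrec n]
      push_cast
      have : α * ((l : ℝ) * M (n + 1) - M n) - ((l : ℝ) * N (n + 1) - N n)
          = (l : ℝ) * (α * M (n + 1) - N (n + 1)) - (α * M n - N n) := by ring
      rw [this, h1, h2]
      have : (l : ℝ) * α ^ (n + 2) - α ^ (n + 1)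
          = α ^ (n + 1) * ((l : ℝ) * α - 1) := by ring
      rw [this, ← hroot]; ring
  have hrep : ∀ k : ℕ, (N k : ℝ) / (M k : ℝ) = α - α ^ (k + 1) / (M k : ℝ) := by
    intro k
    have h := (hE k).1
    have hm : (M k : ℝ) ≠ 0 := (hMposR k).ne'
    rw [← h]
    field_simp
    ring
  have htend : Filter.Tendsto (fun k : ℕ => α ^ (k + 1) / (M k : ℝ))
      Filter.atTop (nhds 0) := by
    apply squeeze_zero
      (fun k => div_nonneg (pow_nonneg hαnonneg _) (hMposR k).le)
      (g := fun k : ℕ => 1 / ((k : ℝ) + 1))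
    · intro k
      apply div_le_div₀ (by norm_num) (pow_le_one₀ hαnonneg hαle1)
        (by positivity)
      exact_mod_cast hMge k
    · exact tendsto_one_div_add_atTop_nhds_zero_nat
  have : Filter.Tendsto (fun k : ℕ => α - α ^ (k + 1) / (M k : ℝ))
      Filter.atTop (nhds α) := by
    simpa using (htend.const_sub α)
  exact this.congr (fun k => (hrep k).symm)
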